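/- Truncated-horizon bias of the average reward estimate: Let P be stochastic with gain J = P_* r and bias V (so r + P V = J + V), and let K = P J. For the H-horizon average starting at (s,a): |E[(1/(H+1)) Σ_{i=0}^H r(s_i,a_i)] − K(s,a)| ≤ 2(‖V‖_∞ + ‖r‖_∞)/(H+1), where the expectation is under the chain with kernel P. -/

import Mathlib

open Matrix Filter Finset

/-- A row-stochastic matrix: nonnegative entries and rows summing to 1. -/
def IsStochastic {n : Type*} [Fintype n] (P : Matrix n n ℝ) : Prop :=
  (∀ i j, 0 ≤ P i j) ∧ ∀ i, ∑ j, P i j = 1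

/-- `Pstar` is the Cesàro limit of the powers of `P`. -/
def CesaroLimit {n : Type*} [Fintype n] [DecidableEq n] (P Pstar : Matrix n n ℝ) : Prop :=
  Filter.Tendsto (fun H : ℕ => (H : ℝ)⁻¹ • ∑ i ∈ Finset.range H, P ^ i)
    Filter.atTop (nhds Pstar)

lemma IsStochastic.pow {n : Type*} [Fintype n] [DecidableEq n] {P : Matrix n n ℝ}
    (hP : IsStochastic P) (k : ℕ) : IsStochastic (P ^ k) := by
  induction k with
  | zero =>
    refine ⟨fun i j => ?_, fun i => ?_⟩ <;>
      simp [Matrix.one_apply, Finset.sum_ite_eq]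
    positivity
  | succ k ih =>
    rw [pow_succ]
    refine ⟨fun i j => ?_, fun i => ?_⟩
    · rw [Matrix.mul_apply]
      exact Finset.sum_nonneg fun l _ => mul_nonneg (ih.1 i l) (hP.1 l j)
    · simp only [Matrix.mul_apply]
      rw [Finset.sum_comm]
      calc ∑ l, ∑ j, (P ^ k) i l * P l j = ∑ l, (P ^ k) i l * ∑ j, P l j := by
            simp [Finset.mul_sum]
        _ = 1 := by simp [hP.2, ih.2 i]

lemma IsStochastic.entry_le_one {n : Type*} [Fintype n] {P : Matrix n n ℝ}
    (hP : IsStochastic P) (i j : n) : P i j ≤ 1 := by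
  calc P i j ≤ ∑ l, P i l :=
        Finset.single_le_sum (fun l _ => hP.1 i l) (Finset.mem_univ j)
    _ = 1 := hP.2 i

lemma IsStochastic.abs_mulVec_le {n : Type*} [Fintype n] {Q : Matrix n n ℝ}
    (hQ : IsStochastic Q) (v : n → ℝ) (s : n) : |(Q *ᵥ v) s| ≤ ‖v‖ := by
  have h1 : (Q *ᵥ v) s = ∑ j, Q s j * v j := rfl
  rw [h1]
  calc |∑ j, Q s j * v j| ≤ ∑ j, |Q s j * v j| := Finset.abs_sum_le_sum_abs _ _
    _ ≤ ∑ j, Q s j * ‖v‖ := by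
        refine Finset.sum_le_sum fun j _ => ?_
        rw [abs_mul, abs_of_nonneg (hQ.1 s j)]
        have hvj : |v j| ≤ ‖v‖ := by
          simpa [Real.norm_eq_abs] using norm_le_pi_norm v j
        exact mul_le_mul_of_nonneg_left hvj (hQ.1 s j)
    _ = ‖v‖ := by rw [← Finset.sum_mul, hQ.2 s, one_mul]

lemma sum_mulVec' {n : Type*} [Fintype n] {ι : Type*} (s : Finset ι)
    (M : ι → Matrix n n ℝ) (x : n → ℝ) :
    (∑ i ∈ s, M i) *ᵥ x = ∑ i ∈ s, M i *ᵥ x := by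
  induction s using Finset.cons_induction with
  | empty => simp [Matrix.zero_mulVec]
  | cons a s h ih => simp [Finset.sum_cons, Matrix.add_mulVec, ih]

/-- Truncated-horizon bias of the average reward estimate: the expected `H`-horizon
average of rewards starting from `s`, namely `(1/(H+1)) ∑_{i=0}^H (Pⁱ r)(s)`, is within
`2(‖V‖_∞ + ‖r‖_∞)/(H+1)` of `K = P J`. -/
theorem truncated_horizon_bias {n : Type*} [Fintype n] [DecidableEq n]
    (P Pstar : Matrix n n ℝ) (hP : IsStochastic P) (hC : CesaroLimit P Pstar)
    (r J V K : n → ℝ)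
    (hJ : J = Pstar *ᵥ r)
    (hV : V = (1 - P + Pstar)⁻¹ *ᵥ ((1 - Pstar) *ᵥ r))
    (hK : K = P *ᵥ J) :
    ∀ (s : n) (H : ℕ),
      |((H : ℝ) + 1)⁻¹ * ∑ i ∈ Finset.range (H + 1), (P ^ i *ᵥ r) s - K s| ≤
        2 * (‖V‖ + ‖r‖) / ((H : ℝ) + 1) := by
  set A : ℕ → Matrix n n ℝ := fun H => (H : ℝ)⁻¹ • ∑ i ∈ Finset.range H, P ^ i with hA
  -- the error term tends to zero
  have hE : Tendsto (fun H : ℕ => (H : ℝ)⁻¹ • (P ^ H - 1)) atTop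
      (nhds (0 : Matrix n n ℝ)) := by
    refine tendsto_pi_nhds.mpr ?_
    intro i
    rw [show ((0 : Matrix n n ℝ) i) = 0 from rfl, tendsto_pi_nhds]
    intro j
    have hb : Tendsto (fun H : ℕ => 2 * (H : ℝ)⁻¹) atTop (nhds 0) := by
      simpa [one_div] using tendsto_one_div_atTop_nhds_zero_nat.const_mul (2 : ℝ)
    refine squeeze_zero_norm (fun H => ?_) hb
    have h0 : 0 ≤ (P ^ H) i j := (hP.pow H).1 i j
    have h1 : (P ^ H) i j ≤ 1 := (hP.pow H).entry_le_one i j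
    have h2 : |(P ^ H - 1) i j| ≤ 2 := by
      rw [Matrix.sub_apply]
      rcases le_or_gt ((1 : Matrix n n ℝ) i j) ((P ^ H) i j) with h | h
      · rw [abs_of_nonneg (by linarith)]
        have : (0 : ℝ) ≤ (1 : Matrix n n ℝ) i j := by
          by_cases hij : i = j <;> simp [Matrix.one_apply, hij]
        linarith
      · rw [abs_of_neg (by linarith)]
        have : (1 : Matrix n n ℝ) i j ≤ 1 := by
          by_cases hij : i = j <;> simp [Matrix.one_apply, hij]
        linarith
    have h3 : (0:ℝ) ≤ (H : ℝ)⁻¹ := by positivity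
    calc ‖((H : ℝ)⁻¹ • (P ^ H - 1)) i j‖ = (H : ℝ)⁻¹ * |(P ^ H - 1) i j| := by
          simp [Matrix.smul_apply, Real.norm_eq_abs, abs_mul, abs_of_nonneg h3]
      _ ≤ (H : ℝ)⁻¹ * 2 := by exact mul_le_mul_of_nonneg_left h2 h3
      _ = 2 * (H : ℝ)⁻¹ := by ring
  -- P * A H = A H + error
  have key : ∀ H : ℕ, P * A H = A H + (H : ℝ)⁻¹ • (P ^ H - 1) ∧
      A H * P = A H + (H : ℝ)⁻¹ • (P ^ H - 1) := by
    intro H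
    have hsum : ∑ i ∈ Finset.range H, P ^ (i + 1) =
        (∑ i ∈ Finset.range H, P ^ i) + (P ^ H - 1) := by
      have h1 : ∑ i ∈ Finset.range (H + 1), P ^ i =
          (∑ i ∈ Finset.range H, P ^ (i + 1)) + P ^ 0 := Finset.sum_range_succ' _ H
      have h2 : ∑ i ∈ Finset.range (H + 1), P ^ i =
          (∑ i ∈ Finset.range H, P ^ i) + P ^ H := Finset.sum_range_succ _ H
      rw [h1, pow_zero] at h2
      calc ∑ i ∈ Finset.range H, P ^ (i + 1)
          = ((∑ i ∈ Finset.range H, P ^ (i + 1)) + 1) - 1 := by abel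
        _ = ((∑ i ∈ Finset.range H, P ^ i) + P ^ H) - 1 := by rw [← h2]
        _ = (∑ i ∈ Finset.range H, P ^ i) + (P ^ H - 1) := by abel
    constructor
    · have hmul : P * ∑ i ∈ Finset.range H, P ^ i =
          (∑ i ∈ Finset.range H, P ^ i) + (P ^ H - 1) := by
        rw [Finset.mul_sum]
        calc ∑ i ∈ Finset.range H, P * P ^ i
            = ∑ i ∈ Finset.range H, P ^ (i + 1) := by simp [← pow_succ']
          _ = _ := hsum
      rw [hA]
      simp only
      rw [Matrix.mul_smul, hmul, smul_add]
    · have hmul : (∑ i ∈ Finset.range H, P ^ i) * P =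
          (∑ i ∈ Finset.range H, P ^ i) + (P ^ H - 1) := by
        rw [Finset.sum_mul]
        calc ∑ i ∈ Finset.range H, P ^ i * P
            = ∑ i ∈ Finset.range H, P ^ (i + 1) := by simp [← pow_succ]
          _ = _ := hsum
      rw [hA]
      simp only
      rw [Matrix.smul_mul, hmul, smul_add]
  have hPPs : P * Pstar = Pstar := by
    have t1 : Tendsto (fun H => P * A H) atTop (nhds (P * Pstar)) :=
      ((continuous_const.matrix_mul continuous_id).tendsto Pstar).comp hC
    have t2 : Tendsto (fun H => P * A H) atTop (nhds (Pstar + 0)) := by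
      refine Tendsto.congr (fun H => ((key H).1).symm) (hC.add hE)
    rw [add_zero] at t2
    exact tendsto_nhds_unique t1 t2
  have hPsP : Pstar * P = Pstar := by
    have t1 : Tendsto (fun H => A H * P) atTop (nhds (Pstar * P)) :=
      ((continuous_id.matrix_mul continuous_const).tendsto Pstar).comp hC
    have t2 : Tendsto (fun H => A H * P) atTop (nhds (Pstar + 0)) := by
      refine Tendsto.congr (fun H => ((key H).2).symm) (hC.add hE)
    rw [add_zero] at t2
    exact tendsto_nhds_unique t1 t2
  have hpowPs : ∀ k : ℕ, P ^ k * Pstar = Pstar := by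
    intro k
    induction k with
    | zero => simp
    | succ k ih => rw [pow_succ', mul_assoc, ih, hPPs]
  have hPsPs : Pstar * Pstar = Pstar := by
    have t1 : Tendsto (fun H => A H * Pstar) atTop (nhds (Pstar * Pstar)) :=
      ((continuous_id.matrix_mul continuous_const).tendsto Pstar).comp hC
    have t2 : Tendsto (fun H => A H * Pstar) atTop (nhds Pstar) := by
      refine Tendsto.congr' ?_ tendsto_const_nhds
      filter_upwards [eventually_ge_atTop 1] with H hH
      have hH0 : (H : ℝ) ≠ 0 := Nat.cast_ne_zero.mpr (by omega)
      rw [hA]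
      simp only [Matrix.smul_mul, Finset.sum_mul]
      simp only [hpowPs]
      rw [Finset.sum_const, Finset.card_range, ← Nat.cast_smul_eq_nsmul ℝ, smul_smul,
        inv_mul_cancel₀ hH0, one_smul]
    exact tendsto_nhds_unique t1 t2
  set M : Matrix n n ℝ := 1 - P + Pstar with hM
  -- M is invertible
  have hMinj : Function.Injective M.mulVec := by
    have hker : ∀ x : n → ℝ, M *ᵥ x = 0 → x = 0 := by
      intro x hx
      rw [hM, Matrix.add_mulVec, Matrix.sub_mulVec, Matrix.one_mulVec] at hx
      have hPsx : Pstar *ᵥ x = 0 := by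
        have := congrArg (fun y => Pstar *ᵥ y) hx
        simp only [Matrix.mulVec_add, Matrix.mulVec_sub, Matrix.mulVec_mulVec, hPsP,
          hPsPs, Matrix.mulVec_zero] at this
        simpa using this
      have hPx : P *ᵥ x = x := by
        rw [hPsx, add_zero, sub_eq_zero] at hx
        exact hx.symm
      have hpow : ∀ k : ℕ, P ^ k *ᵥ x = x := by
        intro k
        induction k with
        | zero => simp
        | succ k ih => rw [pow_succ, ← Matrix.mulVec_mulVec, hPx, ih]
      have t1 : Tendsto (fun H => A H *ᵥ x) atTop (nhds (Pstar *ᵥ x)) :=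
        ((continuous_id.matrix_mulVec continuous_const).tendsto Pstar).comp hC
      have t2 : Tendsto (fun H => A H *ᵥ x) atTop (nhds x) := by
        refine Tendsto.congr' ?_ tendsto_const_nhds
        filter_upwards [eventually_ge_atTop 1] with H hH
        have hH0 : (H : ℝ) ≠ 0 := Nat.cast_ne_zero.mpr (by omega)
        rw [hA]
        simp only
        rw [Matrix.smul_mulVec, sum_mulVec']
        simp only [hpow]
        rw [Finset.sum_const, Finset.card_range, ← Nat.cast_smul_eq_nsmul ℝ, smul_smul,
          inv_mul_cancel₀ hH0, one_smul]
      exact (tendsto_nhds_unique t2 t1).trans hPsx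
    intro x y hxy
    have : M *ᵥ (x - y) = 0 := by rw [Matrix.mulVec_sub, hxy, sub_self]
    have := hker _ this
    exact sub_eq_zero.mp this
  have hMunit : IsUnit M := Matrix.mulVec_injective_iff_isUnit.mp hMinj
  have hMdet : IsUnit M.det := Matrix.isUnit_iff_isUnit_det M |>.mp hMunit
  have hMMi : M * M⁻¹ = 1 := Matrix.mul_nonsing_inv M hMdet
  -- Pstar * M = Pstar
  have hPsM : Pstar * M = Pstar := by
    rw [hM, mul_add, mul_sub, mul_one, hPsP, hPsPs]
    abel
  have hPsMi : Pstar * M⁻¹ = Pstar := by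
    calc Pstar * M⁻¹ = (Pstar * M) * M⁻¹ := by rw [hPsM]
      _ = Pstar * (M * M⁻¹) := by rw [mul_assoc]
      _ = Pstar := by rw [hMMi, mul_one]
  -- Poisson equation
  have hMV : M *ᵥ V = (1 - Pstar) *ᵥ r := by
    rw [hV, Matrix.mulVec_mulVec, hMMi, Matrix.one_mulVec]
  have hPsV : Pstar *ᵥ V = 0 := by
    rw [hV, Matrix.mulVec_mulVec, Matrix.mulVec_mulVec, hPsMi, ← Matrix.mulVec_mulVec,
      Matrix.sub_mulVec, Matrix.one_mulVec, Matrix.mulVec_sub, Matrix.mulVec_mulVec,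
      hPsPs]
    simp
  have hr : r = J + (V - P *ᵥ V) := by
    rw [hM, Matrix.add_mulVec, Matrix.sub_mulVec, Matrix.one_mulVec, hPsV,
      Matrix.sub_mulVec, Matrix.one_mulVec] at hMV
    rw [hJ]
    have := hMV
    funext s
    have h1 := congrFun this s
    simp only [Pi.add_apply, Pi.sub_apply, Pi.zero_apply] at h1 ⊢
    linarith
  have hPJ : P *ᵥ J = J := by
    rw [hJ, Matrix.mulVec_mulVec, hPPs]
  have hpowJ : ∀ k : ℕ, P ^ k *ᵥ J = J := by
    intro k
    induction k with
    | zero => simp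
    | succ k ih => rw [pow_succ, ← Matrix.mulVec_mulVec, hPJ, ih]
  -- main computation
  intro s H
  have hKJ : K = J := by rw [hK, hPJ]
  set f : ℕ → ℝ := fun i => (P ^ i *ᵥ V) s with hf
  have hterm : ∀ i : ℕ, (P ^ i *ᵥ r) s = J s + (f i - f (i + 1)) := by
    intro i
    rw [hr, Matrix.mulVec_add, Matrix.mulVec_sub, Matrix.mulVec_mulVec, ← pow_succ,
      hpowJ]
    simp [hf]
  have hsum : ∑ i ∈ Finset.range (H + 1), (P ^ i *ᵥ r) s =
      (H + 1 : ℝ) * J s + (f 0 - f (H + 1)) := by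
    calc ∑ i ∈ Finset.range (H + 1), (P ^ i *ᵥ r) s
        = ∑ i ∈ Finset.range (H + 1), (J s + (f i - f (i + 1))) := by
          exact Finset.sum_congr rfl fun i _ => hterm i
      _ = (H + 1 : ℝ) * J s + ∑ i ∈ Finset.range (H + 1), (f i - f (i + 1)) := by
          rw [Finset.sum_add_distrib, Finset.sum_const, Finset.card_range]
          push_cast
          ring
      _ = (H + 1 : ℝ) * J s + (f 0 - f (H + 1)) := by
          rw [Finset.sum_range_sub' f (H + 1)]
  have hH1 : ((H : ℝ) + 1) ≠ 0 := by positivity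
  have hH1' : (0:ℝ) < (H : ℝ) + 1 := by positivity
  have hexpr : ((H : ℝ) + 1)⁻¹ * ∑ i ∈ Finset.range (H + 1), (P ^ i *ᵥ r) s - K s =
      ((H : ℝ) + 1)⁻¹ * (f 0 - f (H + 1)) := by
    rw [hsum, hKJ]
    field_simp
    try ring
  rw [hexpr]
  have hf0 : |f 0| ≤ ‖V‖ := by
    simp only [hf, pow_zero, Matrix.one_mulVec]
    simpa [Real.norm_eq_abs] using norm_le_pi_norm V s
  have hfH : |f (H + 1)| ≤ ‖V‖ := (hP.pow (H + 1)).abs_mulVec_le V s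
  have hrnn : (0:ℝ) ≤ ‖r‖ := norm_nonneg r
  calc |((H : ℝ) + 1)⁻¹ * (f 0 - f (H + 1))|
      = ((H : ℝ) + 1)⁻¹ * |f 0 - f (H + 1)| := by
        rw [abs_mul, abs_of_pos (by positivity)]
    _ ≤ ((H : ℝ) + 1)⁻¹ * (2 * (‖V‖ + ‖r‖)) := by
        refine mul_le_mul_of_nonneg_left ?_ (by positivity)
        calc |f 0 - f (H + 1)| ≤ |f 0| + |f (H + 1)| := abs_sub _ _
          _ ≤ ‖V‖ + ‖V‖ := add_le_add hf0 hfH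
          _ ≤ 2 * (‖V‖ + ‖r‖) := by linarith
    _ = 2 * (‖V‖ + ‖r‖) / ((H : ℝ) + 1) := by
        field_simp
        try ring
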